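/- For every finite simple graph G = (V,E) on n ≥ 2 vertices and every real α > 0, there exists a set E^s ⊆ E with |E^s| ≤ α·n·log₂ n such that every connected component C of the graph (V, E∖E^s) either consists of a single vertex or, regarded as a graph on its own vertex set, has expansion φ(C) ≥ α. -/
import Mathlib


/-- Edges of `G` with one endpoint in `S` and the other endpoint in `U \ S`:
the cut edges `∂(S)` of `S`, inside the subgraph of `G` induced by `U` (when `S ⊆ U`). -/
def cutEdgesIn {V : Type*} (G : SimpleGraph V) (U S : Set V) : Set (Sym2 V) :=
  {e | e ∈ G.edgeSet ∧ ∃ u v, e = s(u, v) ∧ u ∈ S ∧ v ∈ U ∧ v ∉ S}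

/-- `δ(S)`, the number of cut edges of `S` inside the subgraph induced by `U`. -/
noncomputable def deltaIn {V : Type*} (G : SimpleGraph V) (U S : Set V) : ℕ :=
  (cutEdgesIn G U S).ncard

/-- The expansion `φ(S)` of the cut `S` inside the subgraph of `G` induced by `U`. -/
noncomputable def phiIn {V : Type*} (G : SimpleGraph V) (U S : Set V) : ℝ :=
  (deltaIn G U S : ℝ) / min (S.ncard : ℝ) ((U \ S).ncard : ℝ)

private lemma key_ineq {a b : ℝ} (ha : 1 ≤ a) (hb : 1 ≤ b) :
    min a b + a * Real.logb 2 a + b * Real.logb 2 b ≤ (a + b) * Real.logb 2 (a + b) := by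
  wlog hab : a ≤ b with H
  · have h := H hb ha (le_of_not_ge hab)
    rw [show b + a = a + b from add_comm b a, min_comm b a] at h
    linarith
  have ha0 : (0:ℝ) < a := lt_of_lt_of_le one_pos ha
  have hb0 : (0:ℝ) < b := lt_of_lt_of_le one_pos hb
  have hmin : min a b = a := min_eq_left hab
  have h2a : Real.logb 2 (2 * a) = 1 + Real.logb 2 a := by
    rw [Real.logb_mul two_ne_zero (ne_of_gt ha0), Real.logb_self_eq_one one_lt_two]
  have h1 : a * Real.logb 2 (2 * a) ≤ a * Real.logb 2 (a + b) :=
    mul_le_mul_of_nonneg_left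
      (Real.logb_le_logb_of_le one_lt_two (by linarith) (by linarith)) ha0.le
  have h2 : b * Real.logb 2 b ≤ b * Real.logb 2 (a + b) :=
    mul_le_mul_of_nonneg_left
      (Real.logb_le_logb_of_le one_lt_two hb0 (by linarith)) hb0.le
  rw [hmin]
  rw [h2a] at h1
  nlinarith [h1, h2]

private lemma rhs_nonneg {α : ℝ} (hα : 0 < α) (m : ℕ) :
    0 ≤ α * m * Real.logb 2 m := by
  rcases Nat.eq_zero_or_pos m with h | h
  · simp [h]
  · have h1 : (1:ℝ) ≤ m := by exact_mod_cast h
    have := Real.logb_nonneg one_lt_two h1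
    positivity

private lemma aux {V : Type*} [Fintype V] (G : SimpleGraph V) (α : ℝ) (hα : 0 < α) :
    ∀ n (U : Set V), U.ncard ≤ n →
    ∃ (Es : Set (Sym2 V)) (P : Set (Set V)),
      (∀ e ∈ Es, e ∈ G.edgeSet ∧ ∀ x ∈ e, x ∈ U) ∧
      (Es.ncard : ℝ) ≤ α * U.ncard * Real.logb 2 U.ncard ∧
      (∀ x ∈ U, ∃ p ∈ P, x ∈ p) ∧
      (∀ p ∈ P, p ⊆ U) ∧
      (∀ p ∈ P, ∀ e ∈ Es, ¬ ∀ x ∈ e, x ∈ p) ∧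
      (∀ p ∈ P, cutEdgesIn G U p ⊆ Es) ∧
      (∀ p ∈ P, p.ncard = 1 ∨ ∀ S : Set V, S ⊆ p → S.Nonempty → S ≠ p →
        α * min (S.ncard : ℝ) ((p \ S).ncard : ℝ) ≤ (deltaIn G p S : ℝ)) := by
  intro n
  induction n with
  | zero =>
    intro U hU
    have hUe : U = ∅ := by
      have := Set.ncard_eq_zero (Set.toFinite U) |>.mp (Nat.le_zero.mp hU)
      exact this
    refine ⟨∅, ∅, ?_, ?_, ?_, ?_, ?_, ?_, ?_⟩ <;> simp [hUe]
  | succ n ih =>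
    intro U hU
    by_cases hcut : ∃ S : Set V, S ⊆ U ∧ S.Nonempty ∧ S ≠ U ∧
        (deltaIn G U S : ℝ) < α * min (S.ncard : ℝ) ((U \ S).ncard : ℝ)
    · obtain ⟨S, hSU, hSne, hSneq, hsparse⟩ := hcut
      set T := U \ S with hT
      have hUfin : U.Finite := Set.toFinite U
      have hSlt : S.ncard < U.ncard :=
        Set.ncard_lt_ncard (HasSubset.Subset.ssubset_of_ne hSU hSneq) hUfin
      have hTss : T ⊂ U := by
        rw [Set.ssubset_iff_of_subset Set.diff_subset]
        obtain ⟨s, hs⟩ := hSne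
        exact ⟨s, hSU hs, fun h => h.2 hs⟩
      have hTlt : T.ncard < U.ncard := Set.ncard_lt_ncard hTss hUfin
      have hTne : T.Nonempty := by
        rcases Set.eq_empty_or_nonempty T with h | h
        · exfalso
          apply hSneq
          apply Set.Subset.antisymm hSU
          intro x hx
          by_contra hxS
          have : x ∈ T := ⟨hx, hxS⟩
          simp [h] at this
        · exact h
      obtain ⟨Es1, P1, h1a, h1b, h1c, h1d, h1e, h1f, h1g⟩ :=
        ih S (by omega)
      obtain ⟨Es2, P2, h2a, h2b, h2c, h2d, h2e, h2f, h2g⟩ :=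
        ih T (by omega)
      refine ⟨cutEdgesIn G U S ∪ (Es1 ∪ Es2), P1 ∪ P2, ?_, ?_, ?_, ?_, ?_, ?_, ?_⟩
      · -- edges of Es are G-edges inside U
        rintro e (he | he | he)
        · obtain ⟨heG, u, v, rfl, hu, hv, hvS⟩ := he
          exact ⟨heG, fun x hx => by
            rcases Sym2.mem_iff.mp hx with rfl | rfl
            exacts [hSU hu, hv]⟩
        · exact ⟨(h1a e he).1, fun x hx => hSU ((h1a e he).2 x hx)⟩
        · exact ⟨(h2a e he).1, fun x hx => (Set.diff_subset) ((h2a e he).2 x hx)⟩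
      · -- cardinality bound
        have hfin1 : (cutEdgesIn G U S).Finite := Set.toFinite _
        have hcard : ((cutEdgesIn G U S ∪ (Es1 ∪ Es2)).ncard : ℝ) ≤
            (deltaIn G U S : ℝ) + (Es1.ncard : ℝ) + (Es2.ncard : ℝ) := by
          have u1 := Set.ncard_union_le (cutEdgesIn G U S) (Es1 ∪ Es2)
          have u2 := Set.ncard_union_le Es1 Es2
          have hn : (cutEdgesIn G U S ∪ (Es1 ∪ Es2)).ncard ≤
              (cutEdgesIn G U S).ncard + Es1.ncard + Es2.ncard := by omega
          unfold deltaIn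
          exact_mod_cast hn
        have hS1 : (1:ℝ) ≤ (S.ncard : ℝ) := by
          have := Set.ncard_pos (Set.toFinite S) |>.mpr hSne
          exact_mod_cast this
        have hT1 : (1:ℝ) ≤ (T.ncard : ℝ) := by
          have := Set.ncard_pos (Set.toFinite T) |>.mpr hTne
          exact_mod_cast this
        have hsum : (S.ncard : ℝ) + (T.ncard : ℝ) = (U.ncard : ℝ) := by
          have := Set.ncard_diff_add_ncard_of_subset hSU hUfin
          rw [hT]
          push_cast [← this]
          ring
        have hk := key_ineq hS1 hT1
        rw [hsum] at hk
        have hk' := mul_le_mul_of_nonneg_left hk hα.le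
        nlinarith [h1b, h2b, hsparse, hcard]
      · -- cover
        intro x hx
        by_cases hxS : x ∈ S
        · obtain ⟨p, hp, hxp⟩ := h1c x hxS
          exact ⟨p, Or.inl hp, hxp⟩
        · obtain ⟨p, hp, hxp⟩ := h2c x ⟨hx, hxS⟩
          exact ⟨p, Or.inr hp, hxp⟩
      · -- parts in U
        rintro p (hp | hp)
        · exact (h1d p hp).trans hSU
        · exact (h2d p hp).trans Set.diff_subset
      · -- no removed edge inside a part
        rintro p (hp | hp) e (he | he | he) hall
        · obtain ⟨heG, u, v, rfl, hu, hv, hvS⟩ := he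
          exact hvS (h1d p hp (hall v (Sym2.mem_mk_right u v)))
        · exact h1e p hp e he hall
        · -- p ⊆ S, e inside T: contradiction via a vertex of e
          have hx1 : (Sym2.Mem.other (Sym2.out_fst_mem e)) ∈ e := Sym2.other_mem _
          have hx0 : e.out.1 ∈ e := Sym2.out_fst_mem e
          have : e.out.1 ∈ T := (h2a e he).2 _ hx0
          have : e.out.1 ∈ S := h1d p hp (hall _ hx0)
          exact ((h2a e he).2 _ hx0).2 this
        · obtain ⟨heG, u, v, rfl, hu, hv, hvS⟩ := he
          have huT : u ∈ p := hall u (Sym2.mem_mk_left u v)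
          exact hSne.elim (fun s hs => ((h2d p hp huT).2 hu))
        · have hx0 : e.out.1 ∈ e := Sym2.out_fst_mem e
          have h1 : e.out.1 ∈ S := (h1a e he).2 _ hx0
          exact ((h2d p hp (hall _ hx0)).2 h1)
        · exact h2e p hp e he hall
      · -- crossing edges are removed
        rintro p hp e ⟨heG, u, v, rfl, hu, hv, hvp⟩
        rcases hp with hp | hp
        · by_cases hvS : v ∈ S
          · exact Or.inr (Or.inl (h1f p hp ⟨heG, u, v, rfl, hu, hvS, hvp⟩))
          · exact Or.inl ⟨heG, u, v, rfl, h1d p hp hu, hv, hvS⟩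
        · by_cases hvT : v ∈ T
          · exact Or.inr (Or.inr (h2f p hp ⟨heG, u, v, rfl, hu, hvT, hvp⟩))
          · -- u ∈ p ⊆ T, v ∈ U, v ∉ T so v ∈ S; flip the edge
            have hvS : v ∈ S := by
              by_contra h
              exact hvT ⟨hv, h⟩
            exact Or.inl ⟨heG, v, u, Sym2.eq_swap, hvS, (h2d p hp).trans Set.diff_subset hu,
              (h2d p hp hu).2⟩
      · -- parts are singletons or expanders
        rintro p (hp | hp)
        · exact h1g p hp
        · exact h2g p hp
    · -- no sparse cut: U itself is a part
      push_neg at hcut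
      refine ⟨∅, {U}, by simp, by simpa using rhs_nonneg hα U.ncard, ?_, by simp, by simp, ?_, ?_⟩
      · intro x hx; exact ⟨U, rfl, hx⟩
      · rintro p rfl e ⟨heG, u, v, rfl, hu, hv, hvp⟩
        exact hvp hv
      · rintro p rfl
        exact Or.inr fun S hS hSne hSneq => hcut S hS hSne hSneq

/-- **expansion decomposition, existence form.**
For every finite simple graph `G` on `n ≥ 2` vertices and every real `α > 0`, there is a set
`Es ⊆ E(G)` with `|Es| ≤ α · n · log₂ n` such that every connected component `C` of `G - Es`
is a singleton or, as a graph on its own vertex set, has expansion at least `α`. -/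
theorem stmt1 {V : Type*} [Fintype V] (G : SimpleGraph V)
    (hn : 2 ≤ Fintype.card V) (α : ℝ) (hα : 0 < α) :
    ∃ Es : Set (Sym2 V), Es ⊆ G.edgeSet ∧
      (Es.ncard : ℝ) ≤ α * (Fintype.card V : ℝ) * Real.logb 2 (Fintype.card V : ℝ) ∧
      ∀ c : (G.deleteEdges Es).ConnectedComponent,
        c.supp.ncard = 1 ∨
        ∀ S : Set V, S ⊆ c.supp → S.Nonempty → S ≠ c.supp →
          α ≤ phiIn (G.deleteEdges Es) c.supp S := by
  obtain ⟨Es, P, ha, hb, hc, hd, he, hf, hg⟩ :=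
    aux G α hα (Set.univ : Set V).ncard Set.univ le_rfl
  have hucard : (Set.univ : Set V).ncard = Fintype.card V := by
    rw [Set.ncard_univ, Nat.card_eq_fintype_card]
  refine ⟨Es, fun e heE => (ha e heE).1, by rw [← hucard]; exact hb, ?_⟩
  set H := G.deleteEdges Es with hH
  intro c
  obtain ⟨v, hv⟩ := c.exists_rep
  have hvsupp : v ∈ c.supp := by
    rw [SimpleGraph.ConnectedComponent.mem_supp_iff]; exact hv
  obtain ⟨p, hp, hvp⟩ := hc v (Set.mem_univ v)
  -- H-edges never leave p
  have hclosed : ∀ a b : V, H.Reachable a b → a ∈ p → b ∈ p := by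
    intro a b hr hap
    obtain ⟨w⟩ := hr
    induction w with
    | nil => exact hap
    | cons h q ihq =>
      rename_i x y z
      apply ihq
      by_contra hyp
      have hGadj : G.Adj x y ∧ s(x, y) ∉ Es := SimpleGraph.deleteEdges_adj.mp h
      exact hGadj.2 (hf p hp ⟨hGadj.1, x, y, rfl, hap, Set.mem_univ y, hyp⟩)
  have hsub : c.supp ⊆ p := by
    intro w hw
    have : H.Reachable v w := by
      rw [SimpleGraph.ConnectedComponent.mem_supp_iff] at hw
      exact (SimpleGraph.ConnectedComponent.eq).mp (hv.trans hw.symm)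
    exact hclosed v w this hvp
  rcases hg p hp with hone | hexp
  · -- p is a singleton: c.supp = p
    left
    obtain ⟨x, hx⟩ := Set.ncard_eq_one.mp hone
    have hvx : v = x := by rw [hx] at hvp; exact hvp
    have : c.supp = {x} := by
      apply Set.Subset.antisymm (hx ▸ hsub)
      intro y hy
      rw [Set.mem_singleton_iff] at hy
      subst hy
      rw [← hvx]
      exact hvsupp
    rw [this]
    exact Set.ncard_singleton x
  · -- p is an expander: show c.supp = p
    have hsupp_eq : c.supp = p := by
      apply Set.Subset.antisymm hsub
      by_contra hne
      have hne' : c.supp ≠ p := fun h => hne (h ▸ subset_refl _)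
      have hexp' := hexp c.supp hsub ⟨v, hvsupp⟩ hne'
      -- δ > 0 gives an H-edge leaving c.supp within p, contradiction
      have hA1 : (1:ℝ) ≤ (c.supp.ncard : ℝ) := by
        have := Set.ncard_pos (Set.toFinite _) |>.mpr ⟨v, hvsupp⟩
        exact_mod_cast this
      have hB1 : (1:ℝ) ≤ ((p \ c.supp).ncard : ℝ) := by
        have hne2 : (p \ c.supp).Nonempty := by
          rw [Set.diff_nonempty]
          intro h
          exact hne' (Set.Subset.antisymm hsub h)
        have := Set.ncard_pos (Set.toFinite _) |>.mpr hne2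
        exact_mod_cast this
      have hδpos : 0 < (deltaIn G p c.supp : ℝ) := by
        have : 0 < α * min ((c.supp.ncard : ℝ)) (((p \ c.supp).ncard : ℝ)) := by
          apply mul_pos hα
          exact lt_min (by linarith) (by linarith)
        linarith
      have hnonempty : (cutEdgesIn G p c.supp).Nonempty := by
        rw [Set.nonempty_iff_ne_empty]
        intro h
        unfold deltaIn at hδpos
        rw [h] at hδpos
        simp at hδpos
      obtain ⟨e, heG, u, w, rfl, hu, hwp, hwA⟩ := hnonempty
      have heEs : s(u, w) ∉ Es := by
        intro hmem
        apply he p hp _ hmem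
        intro x hx
        rcases Sym2.mem_iff.mp hx with rfl | rfl
        exacts [hsub hu, hwp]
      have hHadj : H.Adj u w := SimpleGraph.deleteEdges_adj.mpr
        ⟨(SimpleGraph.mem_edgeSet G).mp heG, heEs⟩
      have hwsupp : w ∈ c.supp := by
        rw [SimpleGraph.ConnectedComponent.mem_supp_iff] at hu ⊢
        rw [← hu]
        exact SimpleGraph.ConnectedComponent.sound hHadj.symm.reachable
      exact hwA hwsupp
    right
    intro S hS hSne hSneq
    rw [hsupp_eq] at hS hSneq ⊢
    have hexp'' := hexp S hS hSne hSneq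
    -- cutEdgesIn H p S = cutEdgesIn G p S since no Es edge inside p
    have hcuteq : cutEdgesIn H p S = cutEdgesIn G p S := by
      ext e
      constructor
      · rintro ⟨heH, u, w, rfl, hu, hw, hwS⟩
        rw [hH, SimpleGraph.edgeSet_deleteEdges] at heH
        exact ⟨heH.1, u, w, rfl, hu, hw, hwS⟩
      · rintro ⟨heG, u, w, rfl, hu, hw, hwS⟩
        refine ⟨?_, u, w, rfl, hu, hw, hwS⟩
        rw [hH, SimpleGraph.edgeSet_deleteEdges]
        refine ⟨heG, fun hmem => he p hp _ hmem fun x hx => ?_⟩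
        rcases Sym2.mem_iff.mp hx with rfl | rfl
        exacts [hS hu, hw]
    have hmpos : 0 < min ((S.ncard : ℝ)) (((p \ S).ncard : ℝ)) := by
      have h1 : (1:ℝ) ≤ (S.ncard : ℝ) := by
        have := Set.ncard_pos (Set.toFinite _) |>.mpr hSne
        exact_mod_cast this
      have h2 : (1:ℝ) ≤ ((p \ S).ncard : ℝ) := by
        have hne2 : (p \ S).Nonempty := by
          rw [Set.diff_nonempty]
          intro h
          exact hSneq (Set.Subset.antisymm hS h)
        have := Set.ncard_pos (Set.toFinite _) |>.mpr hne2
        exact_mod_cast this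
      exact lt_min (by linarith) (by linarith)
    rw [phiIn, le_div_iff₀ hmpos]
    unfold deltaIn
    rw [hcuteq]
    exact hexp''
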